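/- Let $l, v, P, Q$ be square-integrable random variables with $\tilde v > 0$, $\tilde l \ge 0$, satisfying the linearized relation $\tilde l \,\Delta v + \tilde v\,\Delta l = 2\tilde P\,\Delta P + 2\tilde Q\,\Delta Q$ almost surely (where $\Delta a = a - \tilde a$). Then $\mathrm{cov}(l, v) \le 2\frac{|\tilde P|\,\hat v}{\tilde v\,\hat P}\hat P^2 + 2\frac{|\tilde Q|\,\hat v}{\tilde v\,\hat Q}\hat Q^2$ (interpreting a term as $0$ whenever the corresponding standard deviation $\hat P$ or $\hat Q$ is $0$). -/

import Mathlib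

open MeasureTheory
open scoped ProbabilityTheory

lemma my_cs {Ω : Type*} [MeasureSpace Ω]
    (f g : Ω → ℝ) (hf : Integrable (fun ω => f ω ^ 2))
    (hg : Integrable (fun ω => g ω ^ 2))
    (hfg : Integrable (fun ω => f ω * g ω)) :
    (∫ ω, f ω * g ω) ≤ Real.sqrt (∫ ω, f ω ^ 2) * Real.sqrt (∫ ω, g ω ^ 2) := by
  set A := ∫ ω, f ω ^ 2 with hA
  set B := ∫ ω, g ω ^ 2 with hB
  set C := ∫ ω, f ω * g ω with hC
  have hA0 : 0 ≤ A := integral_nonneg fun ω => sq_nonneg _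
  have hB0 : 0 ≤ B := integral_nonneg fun ω => sq_nonneg _
  have key : ∀ t : ℝ, 0 ≤ A - 2 * t * C + t ^ 2 * B := by
    intro t
    have hsub : Integrable (fun ω => f ω ^ 2 - 2 * t * (f ω * g ω)) :=
      hf.sub (hfg.const_mul _)
    have h2 : (0:ℝ) ≤ ∫ ω, (f ω - t * g ω) ^ 2 := integral_nonneg fun ω => sq_nonneg _
    have h3 : (∫ ω, (f ω - t * g ω) ^ 2)
        = ∫ ω, (f ω ^ 2 - 2 * t * (f ω * g ω)) + t ^ 2 * g ω ^ 2 := by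
      apply integral_congr_ae; filter_upwards with ω; ring
    rw [h3, integral_add hsub (hg.const_mul _), integral_sub hf (hfg.const_mul _),
      integral_const_mul, integral_const_mul] at h2
    linarith
  rcases eq_or_lt_of_le hB0 with hBz | hBpos
  · have hCz : C = 0 := by
      by_contra h
      have h1 := key ((A + 1) / (2 * C))
      rw [← hBz] at h1
      have hm : 2 * ((A + 1) / (2 * C)) * C = A + 1 := by field_simp
      nlinarith
    rw [hCz]; positivity
  · have h := key (C / B)
    have e : 2 * (C / B) * C - (C / B) ^ 2 * B = C ^ 2 / B := by
      field_simp; ring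
    have h' : C ^ 2 / B ≤ A := by linarith
    have hCsq : C ^ 2 ≤ A * B := (div_le_iff₀ hBpos).mp h'
    calc C ≤ |C| := le_abs_self C
      _ = Real.sqrt (C ^ 2) := (Real.sqrt_sq_eq_abs C).symm
      _ ≤ Real.sqrt (A * B) := Real.sqrt_le_sqrt hCsq
      _ = Real.sqrt A * Real.sqrt B := Real.sqrt_mul hA0 B

lemma my_abs_cs {Ω : Type*} [MeasureSpace Ω]
    (f g : Ω → ℝ) (hf : Integrable (fun ω => f ω ^ 2))
    (hg : Integrable (fun ω => g ω ^ 2))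
    (hfg : Integrable (fun ω => f ω * g ω)) :
    |∫ ω, f ω * g ω| ≤ Real.sqrt (∫ ω, f ω ^ 2) * Real.sqrt (∫ ω, g ω ^ 2) := by
  rw [abs_le]
  constructor
  · have hf' : Integrable (fun ω => (-f ω) ^ 2) := by
      simpa using hf
    have hfg' : Integrable (fun ω => (-f ω) * g ω) := by
      have := hfg.neg
      apply this.congr; filter_upwards with ω; simp
    have h := my_cs (fun ω => -f ω) g hf' hg hfg'
    have e1 : (∫ ω, (-f ω) * g ω) = -∫ ω, f ω * g ω := by
      rw [← integral_neg]; apply integral_congr_ae; filter_upwards with ω; ring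
    have e2 : (∫ ω, (-f ω) ^ 2) = ∫ ω, f ω ^ 2 := by
      apply integral_congr_ae; filter_upwards with ω; ring
    rw [e1, e2] at h
    linarith
  · exact my_cs f g hf hg hfg

/-- If square-integrable `l, v, P, Q` satisfy `ṽ > 0`, `l̃ ≥ 0` and
the linearized relation `l̃ Δv + ṽ Δl = 2P̃ ΔP + 2Q̃ ΔQ` a.s., then
`cov(l,v) ≤ 2(|P̃| v̂ /(ṽ P̂)) P̂² + 2(|Q̃| v̂ /(ṽ Q̂)) Q̂²` (a term is `0` when the
corresponding standard deviation vanishes — this is the convention of division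
by zero in Lean). -/
theorem stmt8 {Ω : Type*} [MeasureSpace Ω] [IsProbabilityMeasure (ℙ : Measure Ω)]
    (l v P Q : Ω → ℝ) (tl tv tP tQ hv hP hQ covlv : ℝ)
    (htl : tl = ∫ ω, l ω) (htv : tv = ∫ ω, v ω)
    (htP : tP = ∫ ω, P ω) (htQ : tQ = ∫ ω, Q ω)
    (hhv : hv = Real.sqrt (∫ ω, (v ω - tv) ^ 2))
    (hhP : hP = Real.sqrt (∫ ω, (P ω - tP) ^ 2))
    (hhQ : hQ = Real.sqrt (∫ ω, (Q ω - tQ) ^ 2))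
    (hcov : covlv = ∫ ω, (l ω - tl) * (v ω - tv))
    (hv2 : Integrable (fun ω => (v ω - tv) ^ 2))
    (hP2 : Integrable (fun ω => (P ω - tP) ^ 2))
    (hQ2 : Integrable (fun ω => (Q ω - tQ) ^ 2))
    (hlvint : Integrable (fun ω => (l ω - tl) * (v ω - tv)))
    (hPvint : Integrable (fun ω => (P ω - tP) * (v ω - tv)))
    (hQvint : Integrable (fun ω => (Q ω - tQ) * (v ω - tv)))
    (htvpos : 0 < tv) (htlnn : 0 ≤ tl)
    (hrel : ∀ᵐ ω, tl * (v ω - tv) + tv * (l ω - tl)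
        = 2 * tP * (P ω - tP) + 2 * tQ * (Q ω - tQ)) :
    covlv ≤ 2 * (|tP| * hv / (tv * hP)) * hP ^ 2
          + 2 * (|tQ| * hv / (tv * hQ)) * hQ ^ 2 := by
  set V := ∫ ω, (v ω - tv) ^ 2 with hV
  set CP := ∫ ω, (P ω - tP) * (v ω - tv) with hCP
  set CQ := ∫ ω, (Q ω - tQ) * (v ω - tv) with hCQ
  have hV0 : 0 ≤ V := integral_nonneg fun ω => sq_nonneg _
  have hv0 : 0 ≤ hv := hhv ▸ Real.sqrt_nonneg _
  have hP0 : 0 ≤ hP := hhP ▸ Real.sqrt_nonneg _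
  have hQ0 : 0 ≤ hQ := hhQ ▸ Real.sqrt_nonneg _
  have hvsq : hv ^ 2 = V := by rw [hhv]; exact Real.sq_sqrt hV0
  -- integrate the relation multiplied by Δv
  have hinteq : (∫ ω, (tl * (v ω - tv) + tv * (l ω - tl)) * (v ω - tv))
      = ∫ ω, (2 * tP * (P ω - tP) + 2 * tQ * (Q ω - tQ)) * (v ω - tv) := by
    apply integral_congr_ae
    filter_upwards [hrel] with ω h
    rw [h]
  have hL : (∫ ω, (tl * (v ω - tv) + tv * (l ω - tl)) * (v ω - tv))
      = tl * V + tv * covlv := by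
    have e : (∫ ω, (tl * (v ω - tv) + tv * (l ω - tl)) * (v ω - tv))
        = ∫ ω, tl * (v ω - tv) ^ 2 + tv * ((l ω - tl) * (v ω - tv)) := by
      apply integral_congr_ae; filter_upwards with ω; ring
    rw [e, integral_add (hv2.const_mul _) (hlvint.const_mul _),
      integral_const_mul, integral_const_mul, hcov]
  have hR : (∫ ω, (2 * tP * (P ω - tP) + 2 * tQ * (Q ω - tQ)) * (v ω - tv))
      = 2 * tP * CP + 2 * tQ * CQ := by
    have e : (∫ ω, (2 * tP * (P ω - tP) + 2 * tQ * (Q ω - tQ)) * (v ω - tv))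
        = ∫ ω, (2 * tP) * ((P ω - tP) * (v ω - tv))
            + (2 * tQ) * ((Q ω - tQ) * (v ω - tv)) := by
      apply integral_congr_ae; filter_upwards with ω; ring
    rw [e, integral_add (hPvint.const_mul _) (hQvint.const_mul _),
      integral_const_mul, integral_const_mul]
  have hkey : tl * V + tv * covlv = 2 * tP * CP + 2 * tQ * CQ := by
    rw [← hL, ← hR, hinteq]
  -- Cauchy–Schwarz bounds
  have hCSP : |CP| ≤ hP * hv := by
    rw [hhP, hhv]
    exact my_abs_cs _ _ hP2 hv2 hPvint
  have hCSQ : |CQ| ≤ hQ * hv := by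
    rw [hhQ, hhv]
    exact my_abs_cs _ _ hQ2 hv2 hQvint
  have hbP : tP * CP ≤ |tP| * (hP * hv) := by
    calc tP * CP ≤ |tP * CP| := le_abs_self _
      _ = |tP| * |CP| := abs_mul _ _
      _ ≤ |tP| * (hP * hv) := mul_le_mul_of_nonneg_left hCSP (abs_nonneg _)
  have hbQ : tQ * CQ ≤ |tQ| * (hQ * hv) := by
    calc tQ * CQ ≤ |tQ * CQ| := le_abs_self _
      _ = |tQ| * |CQ| := abs_mul _ _
      _ ≤ |tQ| * (hQ * hv) := mul_le_mul_of_nonneg_left hCSQ (abs_nonneg _)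
  have htlV : 0 ≤ tl * V := mul_nonneg htlnn hV0
  have hmain : tv * covlv ≤ 2 * (|tP| * (hP * hv)) + 2 * (|tQ| * (hQ * hv)) := by
    linarith
  -- rewrite the RHS
  have eP : 2 * (|tP| * hv / (tv * hP)) * hP ^ 2 = 2 * (|tP| * (hP * hv)) / tv := by
    rcases eq_or_lt_of_le hP0 with h0 | hpos
    · rw [← h0]; simp
    · field_simp
  have eQ : 2 * (|tQ| * hv / (tv * hQ)) * hQ ^ 2 = 2 * (|tQ| * (hQ * hv)) / tv := by
    rcases eq_or_lt_of_le hQ0 with h0 | hpos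
    · rw [← h0]; simp
    · field_simp
  rw [eP, eQ, ← add_div, le_div_iff₀ htvpos]
  linarith
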